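/- Let m ≥ 1 and let a, b, c ∈ ℂ be nonzero and pairwise distinct. For m-tuples x, y ∈ (ℂ∖{0})^m and parameters p, q, define the map S_{p,q}(x, y) = x' componentwise by x'_1 = (q·y_m⋯y_1 − p·x_m⋯x_1)(y_1 − q)/(x_m⋯x_2·(q·x_1 − p·y_1)) and x'_s = x_s·(y_s − q)(q·x_{s−1} − p·y_{s−1})/((y_{s−1} − q)(q·x_s − p·y_s)) for s = 2,…,m. Then for all m-tuples x, y, z such that all denominators occurring below are nonzero, the 3D-consistency identity S_{a,c}(S_{a,b}(x, y), S_{c,b}(z, y)) = S_{a,b}(S_{a,c}(x, z), S_{b,c}(y, z)) holds. -/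

import Mathlib

/-- The `m`-component superposition map `S_{p,q}(x, y)` of the Bogoyavlensky lattice:
`x'_1 = (q y_m⋯y_1 - p x_m⋯x_1)(y_1 - q)/(x_m⋯x_2 (q x_1 - p y_1))`,
`x'_s = x_s (y_s - q)(q x_{s-1} - p y_{s-1})/((y_{s-1} - q)(q x_s - p y_s))`, `s ≥ 2`. -/
noncomputable def bogSuperpose (m : ℕ) (p q : ℂ) (x y : ℕ → ℂ) : ℕ → ℂ := fun s =>
  if s = 1 then
    (q * (∏ r ∈ Finset.range m, y (r + 1)) - p * ∏ r ∈ Finset.range m, x (r + 1))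
      * (y 1 - q) / ((∏ r ∈ Finset.range (m - 1), x (r + 2)) * (q * x 1 - p * y 1))
  else
    x s * (y s - q) * (q * x (s - 1) - p * y (s - 1))
      / ((y (s - 1) - q) * (q * x s - p * y s))

/-- Nonvanishing of all denominators involved in the map `S_{p,q}(x,y)`. -/
def bogDenomOK (m : ℕ) (p q : ℂ) (x y : ℕ → ℂ) : Prop :=
  ∀ s, 1 ≤ s → s ≤ m → x s ≠ 0 ∧ y s ≠ q ∧ q * x s - p * y s ≠ 0

/-- auxiliary quantity -/
noncomputable def bogF (m : ℕ) (p q : ℂ) (x y : ℕ → ℂ) : ℕ → ℂ := fun s =>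
  if s = 0 then
    (q * (∏ r ∈ Finset.range m, y (r + 1)) - p * ∏ r ∈ Finset.range m, x (r + 1))
      / (∏ r ∈ Finset.range m, x (r + 1))
  else (q * x s - p * y s) / (y s - q)

lemma bogF_ne_zero (m : ℕ) (p q : ℂ) (x y : ℕ → ℂ) (hd : bogDenomOK m p q x y)
    (s : ℕ) (h1 : 1 ≤ s) (h2 : s ≤ m) : bogF m p q x y s ≠ 0 := by
  obtain ⟨-, hy, hn⟩ := hd s h1 h2
  simp only [bogF, if_neg (by omega : s ≠ 0)]
  exact div_ne_zero hn (sub_ne_zero.mpr hy)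

lemma bog_tele (f : ℕ → ℂ) (n : ℕ) (hf : ∀ i, 1 ≤ i → i ≤ n + 1 → f i ≠ 0) :
    ∏ r ∈ Finset.range n, (f (r + 1) / f (r + 2)) = f 1 / f (n + 1) := by
  induction n with
  | zero => simp [div_self (hf 1 le_rfl le_rfl)]
  | succ n ih =>
    rw [Finset.prod_range_succ, ih (fun i h1 h2 => hf i h1 (by omega))]
    have h1 := hf (n + 1) (by omega) (by omega)
    field_simp

lemma bog_prod (m : ℕ) (hm : 1 ≤ m) (p q : ℂ) (x y : ℕ → ℂ) (hd : bogDenomOK m p q x y) :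
    ∏ r ∈ Finset.range m, bogSuperpose m p q x y (r + 1)
      = (∏ r ∈ Finset.range m, x (r + 1)) * bogF m p q x y 0 / bogF m p q x y m := by
  obtain ⟨n, rfl⟩ : ∃ n, m = n + 1 := ⟨m - 1, (Nat.succ_pred_eq_of_pos hm).symm⟩
  have hx : ∀ i, 1 ≤ i → i ≤ n + 1 → x i ≠ 0 := fun i h1 h2 => (hd i h1 h2).1
  have hF : ∀ i, 1 ≤ i → i ≤ n + 1 → bogF (n+1) p q x y i ≠ 0 :=
    fun i h1 h2 => bogF_ne_zero _ _ _ _ _ hd i h1 h2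
  have hstep : ∀ r ∈ Finset.range n, bogSuperpose (n+1) p q x y (r + 2)
      = x (r + 2) * (bogF (n+1) p q x y (r + 1) / bogF (n+1) p q x y (r + 2)) := by
    intro r hr
    rw [Finset.mem_range] at hr
    obtain ⟨hy1, hn1⟩ := (hd (r+1) (by omega) (by omega)).2
    obtain ⟨hy2, hn2⟩ := (hd (r+2) (by omega) (by omega)).2
    simp only [bogSuperpose, bogF, if_neg (by omega : r + 2 ≠ 1),
      if_neg (by omega : r + 1 ≠ 0), if_neg (by omega : r + 2 ≠ 0),
      show r + 2 - 1 = r + 1 from rfl]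
    have h1 := sub_ne_zero.mpr hy1
    have h2 := sub_ne_zero.mpr hy2
    field_simp
  rw [Finset.prod_range_succ' (fun r => bogSuperpose (n+1) p q x y (r + 1)) n]
  rw [Finset.prod_congr rfl hstep, Finset.prod_mul_distrib, bog_tele _ _ hF]
  rw [Finset.prod_range_succ' (fun r => x (r + 1)) n]
  have hE : (∏ r ∈ Finset.range n, x (r + 2)) ≠ 0 :=
    Finset.prod_ne_zero_iff.mpr fun r hr => hx (r+2) (by omega)
      (by simp only [Finset.mem_range] at hr; omega)
  obtain ⟨hy1, hn1⟩ := (hd 1 le_rfl (by omega)).2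
  obtain ⟨hym, hnm⟩ := (hd (n+1) (by omega) le_rfl).2
  have h1 := sub_ne_zero.mpr hy1
  have h2 := sub_ne_zero.mpr hym
  have hP : (∏ r ∈ Finset.range (n+1), x (r + 1)) ≠ 0 :=
    Finset.prod_ne_zero_iff.mpr fun r hr => hx (r+1) (by omega)
      (by simp only [Finset.mem_range] at hr; omega)
  have hPE : (∏ r ∈ Finset.range (n+1), x (r + 1))
      = (∏ r ∈ Finset.range n, x (r + 2)) * x 1 := Finset.prod_range_succ' _ n
  simp only [bogSuperpose, bogF, if_pos rfl, ↓reduceIte, if_neg (Nat.succ_ne_zero n),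
    Nat.add_sub_cancel, zero_add, reduceIte, if_neg one_ne_zero, show ∀ r : ℕ, r + 1 + 1 = r + 2 from fun r => rfl]
  rw [hPE]
  have hx1 : x 1 ≠ 0 := hx 1 le_rfl (by omega)
  field_simp

lemma bogSuperpose_eq_bogF (m : ℕ) (hm : 1 ≤ m) (p q : ℂ) (x y : ℕ → ℂ)
    (hd : bogDenomOK m p q x y) (s : ℕ) (hs1 : 1 ≤ s) (hsm : s ≤ m) :
    bogSuperpose m p q x y s = x s * bogF m p q x y (s - 1) / bogF m p q x y s := by
  rcases eq_or_ne s 1 with rfl | hs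
  · obtain ⟨n, rfl⟩ : ∃ n, m = n + 1 := ⟨m - 1, (Nat.succ_pred_eq_of_pos hm).symm⟩
    have hx : ∀ i, 1 ≤ i → i ≤ n + 1 → x i ≠ 0 := fun i h1 h2 => (hd i h1 h2).1
    have hE : (∏ r ∈ Finset.range n, x (r + 2)) ≠ 0 :=
      Finset.prod_ne_zero_iff.mpr fun r hr => hx (r+2) (by omega)
        (by simp only [Finset.mem_range] at hr; omega)
    have hPE : (∏ r ∈ Finset.range (n+1), x (r + 1))
        = (∏ r ∈ Finset.range n, x (r + 2)) * x 1 := Finset.prod_range_succ' _ n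
    obtain ⟨hy1, hn1⟩ := (hd 1 le_rfl (by omega)).2
    have h1 := sub_ne_zero.mpr hy1
    have hx1 : x 1 ≠ 0 := hx 1 le_rfl (by omega)
    simp only [bogSuperpose, bogF, if_pos rfl, ↓reduceIte, Nat.add_sub_cancel,
      show (1:ℕ) - 1 = 0 from rfl, if_neg one_ne_zero]
    rw [hPE]
    field_simp
  · obtain ⟨hy1, hn1⟩ := (hd (s-1) (by omega) (by omega)).2
    obtain ⟨hy2, hn2⟩ := (hd s hs1 hsm).2
    have h1 := sub_ne_zero.mpr hy1
    have h2 := sub_ne_zero.mpr hy2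
    simp only [bogSuperpose, bogF, if_neg hs, if_neg (by omega : s ≠ 0),
      if_neg (by omega : s - 1 ≠ 0)]
    field_simp

lemma bog_assemble (xs f0 f1 g0 g1 N0 D0 N1 D1 N0' D0' N1' D1' : ℂ)
    (hf0 : f0 ≠ 0) (hf1 : f1 ≠ 0) (hg0 : g0 ≠ 0) (hg1 : g1 ≠ 0)
    (hD0 : D0 ≠ 0) (hN1 : N1 ≠ 0) (hD0' : D0' ≠ 0) (hN1' : N1' ≠ 0)
    (hD1 : D1 ≠ 0) (hD1' : D1' ≠ 0)
    (cr0 : N0 * D0' = N0' * D0) (cr1 : N1 * D1' = N1' * D1) :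
    xs * f0 / f1 * (N0 / (f0 * D0)) / (N1 / (f1 * D1))
      = xs * g0 / g1 * (N0' / (g0 * D0')) / (N1' / (g1 * D1')) := by
  have l : xs * f0 / f1 * (N0 / (f0 * D0)) / (N1 / (f1 * D1))
      = xs * (N0 * D1) / (D0 * N1) := by field_simp
  have r : xs * g0 / g1 * (N0' / (g0 * D0')) / (N1' / (g1 * D1'))
      = xs * (N0' * D1') / (D0' * N1') := by field_simp
  rw [l, r, div_eq_div_iff (mul_ne_zero hD0 hN1) (mul_ne_zero hD0' hN1')]
  linear_combination (xs * D1 * N1') * cr0 - (xs * N0' * D0) * cr1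

noncomputable def bogN (m : ℕ) (a b c : ℂ) (x y z : ℕ → ℂ) : ℕ → ℂ := fun s =>
  c * x s * bogF m a b x y (s - 1) * bogF m c b z y s
    - a * z s * bogF m c b z y (s - 1) * bogF m a b x y s

noncomputable def bogD (m : ℕ) (a b c : ℂ) (x y z : ℕ → ℂ) : ℕ → ℂ := fun s =>
  z s * bogF m c b z y (s - 1) - c * bogF m c b z y s

noncomputable def bogM (m : ℕ) (a b c : ℂ) (x y z : ℕ → ℂ) : ℂ :=
  c * (∏ r ∈ Finset.range m, z (r + 1)) * bogF m c b z y 0 * bogF m a b x y m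
    - a * (∏ r ∈ Finset.range m, x (r + 1)) * bogF m a b x y 0 * bogF m c b z y m

lemma bog_FO (m : ℕ) (hm : 1 ≤ m) (a b c : ℂ) (x y z : ℕ → ℂ)
    (h1 : bogDenomOK m a b x y) (h2 : bogDenomOK m c b z y)
    (h3 : bogDenomOK m a c (bogSuperpose m a b x y) (bogSuperpose m c b z y))
    (s : ℕ) (hs1 : 1 ≤ s) (hsm : s ≤ m) :
    bogF m a c (bogSuperpose m a b x y) (bogSuperpose m c b z y) s
      = bogN m a b c x y z s / (bogF m a b x y s * bogD m a b c x y z s)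
    ∧ bogD m a b c x y z s ≠ 0 ∧ bogN m a b c x y z s ≠ 0 := by
  have hX := bogSuperpose_eq_bogF m hm a b x y h1 s hs1 hsm
  have hW := bogSuperpose_eq_bogF m hm c b z y h2 s hs1 hsm
  have hF1 := bogF_ne_zero m a b x y h1 s hs1 hsm
  have hF2 := bogF_ne_zero m c b z y h2 s hs1 hsm
  have eW : bogSuperpose m c b z y s - c
      = bogD m a b c x y z s / bogF m c b z y s := by
    rw [hW]; simp only [bogD]; field_simp
  have hD : bogD m a b c x y z s ≠ 0 := by
    intro h
    exact sub_ne_zero.mpr (h3 s hs1 hsm).2.1 (by rw [eW, h, zero_div])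
  have eXW : c * bogSuperpose m a b x y s - a * bogSuperpose m c b z y s
      = bogN m a b c x y z s / (bogF m a b x y s * bogF m c b z y s) := by
    rw [hX, hW]; simp only [bogN]; field_simp
  have hN : bogN m a b c x y z s ≠ 0 := by
    intro h
    exact (h3 s hs1 hsm).2.2 (by rw [eXW, h, zero_div])
  refine ⟨?_, hD, hN⟩
  have e0 : bogF m a c (bogSuperpose m a b x y) (bogSuperpose m c b z y) s
      = (c * bogSuperpose m a b x y s - a * bogSuperpose m c b z y s)
        / (bogSuperpose m c b z y s - c) := by
    simp only [bogF, if_neg (by omega : s ≠ 0)]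
  rw [e0, eXW, eW]
  field_simp

lemma bog_FO0 (m : ℕ) (hm : 1 ≤ m) (a b c : ℂ) (x y z : ℕ → ℂ)
    (h1 : bogDenomOK m a b x y) (h2 : bogDenomOK m c b z y)
    (h3 : bogDenomOK m a c (bogSuperpose m a b x y) (bogSuperpose m c b z y)) :
    bogF m a c (bogSuperpose m a b x y) (bogSuperpose m c b z y) 0
      = bogM m a b c x y z
        / (bogF m a b x y 0 * ((∏ r ∈ Finset.range m, x (r + 1)) * bogF m c b z y m))
    ∧ bogF m a b x y 0 ≠ 0 := by
  have hX1 := bogSuperpose_eq_bogF m hm a b x y h1 1 le_rfl hm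
  rw [show (1:ℕ) - 1 = 0 from rfl] at hX1
  have hF10 : bogF m a b x y 0 ≠ 0 := by
    intro h
    exact (h3 1 le_rfl hm).1 (by rw [hX1, h, mul_zero, zero_div])
  refine ⟨?_, hF10⟩
  have e0 : bogF m a c (bogSuperpose m a b x y) (bogSuperpose m c b z y) 0
      = (c * (∏ r ∈ Finset.range m, bogSuperpose m c b z y (r + 1))
          - a * ∏ r ∈ Finset.range m, bogSuperpose m a b x y (r + 1))
        / (∏ r ∈ Finset.range m, bogSuperpose m a b x y (r + 1)) := by
    simp only [bogF, if_pos rfl, if_true]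
  have hP : (∏ r ∈ Finset.range m, x (r + 1)) ≠ 0 :=
    Finset.prod_ne_zero_iff.mpr fun r hr => (h1 (r+1) (by omega)
      (by simp only [Finset.mem_range] at hr; omega)).1
  have hF1m := bogF_ne_zero m a b x y h1 m hm le_rfl
  have hF2m := bogF_ne_zero m c b z y h2 m hm le_rfl
  rw [e0, bog_prod m hm a b x y h1, bog_prod m hm c b z y h2]
  simp only [bogM]
  field_simp

lemma bog_crN (m : ℕ) (a b c : ℂ) (x y z : ℕ → ℂ)
    (h1 : bogDenomOK m a b x y) (h2 : bogDenomOK m c b z y)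
    (h5 : bogDenomOK m b c y z)
    (s : ℕ) (hs1 : 1 ≤ s) (hsm : s ≤ m) :
    bogN m a b c x y z s * bogD m a c b x z y s
      = bogN m a c b x z y s * bogD m a b c x y z s := by
  have hyb : ∀ i, 1 ≤ i → i ≤ m → y i - b ≠ 0 :=
    fun i p q => sub_ne_zero.mpr (h1 i p q).2.1
  have hzc : ∀ i, 1 ≤ i → i ≤ m → z i - c ≠ 0 :=
    fun i p q => sub_ne_zero.mpr (h5 i p q).2.1
  simp only [bogN, bogD]
  rcases eq_or_ne s 1 with rfl | hs
  · have hP : (∏ r ∈ Finset.range m, x (r + 1)) ≠ 0 :=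
      Finset.prod_ne_zero_iff.mpr fun r hr => (h1 (r+1) (by omega)
        (by simp only [Finset.mem_range] at hr; omega)).1
    have hQ : (∏ r ∈ Finset.range m, y (r + 1)) ≠ 0 :=
      Finset.prod_ne_zero_iff.mpr fun r hr => (h5 (r+1) (by omega)
        (by simp only [Finset.mem_range] at hr; omega)).1
    have hR : (∏ r ∈ Finset.range m, z (r + 1)) ≠ 0 :=
      Finset.prod_ne_zero_iff.mpr fun r hr => (h2 (r+1) (by omega)
        (by simp only [Finset.mem_range] at hr; omega)).1
    have e1 := hyb 1 le_rfl hsm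
    have e2 := hzc 1 le_rfl hsm
    simp only [bogF, show (1:ℕ) - 1 = 0 from rfl, if_pos rfl, if_true,
      if_neg one_ne_zero]
    field_simp
    ring
  · have e1 := hyb s hs1 hsm
    have e2 := hzc s hs1 hsm
    have e3 := hyb (s-1) (by omega) (by omega)
    have e4 := hzc (s-1) (by omega) (by omega)
    simp only [bogF, if_neg (by omega : s ≠ 0), if_neg (by omega : s - 1 ≠ 0)]
    field_simp
    ring

lemma bog_crM (m : ℕ) (hm : 1 ≤ m) (a b c : ℂ) (x y z : ℕ → ℂ)
    (h1 : bogDenomOK m a b x y) (h2 : bogDenomOK m c b z y)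
    (h5 : bogDenomOK m b c y z) :
    bogM m a b c x y z * bogF m b c y z m
      = bogM m a c b x z y * bogF m c b z y m := by
  have e1 := sub_ne_zero.mpr (h1 m hm le_rfl).2.1
  have e2 := sub_ne_zero.mpr (h5 m hm le_rfl).2.1
  have hP : (∏ r ∈ Finset.range m, x (r + 1)) ≠ 0 :=
    Finset.prod_ne_zero_iff.mpr fun r hr => (h1 (r+1) (by omega)
      (by simp only [Finset.mem_range] at hr; omega)).1
  have hQ : (∏ r ∈ Finset.range m, y (r + 1)) ≠ 0 :=
    Finset.prod_ne_zero_iff.mpr fun r hr => (h5 (r+1) (by omega)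
      (by simp only [Finset.mem_range] at hr; omega)).1
  have hR : (∏ r ∈ Finset.range m, z (r + 1)) ≠ 0 :=
    Finset.prod_ne_zero_iff.mpr fun r hr => (h2 (r+1) (by omega)
      (by simp only [Finset.mem_range] at hr; omega)).1
  simp only [bogM, bogF, if_pos rfl, if_true, if_neg (by omega : m ≠ 0)]
  field_simp
  ring

/-- 3D-consistency (Yang–Baxter property) of the superposition map of the
Bogoyavlensky lattice: `T_k T_j (f^{(i)}) = T_j T_k (f^{(i)})`. -/
theorem bogoyavlensky_superposition_3D_consistency
    (m : ℕ) (hm : 1 ≤ m) (a b c : ℂ)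
    (ha : a ≠ 0) (hb : b ≠ 0) (hc : c ≠ 0)
    (hab : a ≠ b) (hac : a ≠ c) (hbc : b ≠ c)
    (x y z : ℕ → ℂ)
    (h1 : bogDenomOK m a b x y)
    (h2 : bogDenomOK m c b z y)
    (h3 : bogDenomOK m a c (bogSuperpose m a b x y) (bogSuperpose m c b z y))
    (h4 : bogDenomOK m a c x z)
    (h5 : bogDenomOK m b c y z)
    (h6 : bogDenomOK m a b (bogSuperpose m a c x z) (bogSuperpose m b c y z)) :
    ∀ s, 1 ≤ s → s ≤ m →
      bogSuperpose m a c (bogSuperpose m a b x y) (bogSuperpose m c b z y) s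
        = bogSuperpose m a b (bogSuperpose m a c x z) (bogSuperpose m b c y z) s := by
  intro s hs1 hsm
  have hL := bogSuperpose_eq_bogF m hm a c _ _ h3 s hs1 hsm
  have hR := bogSuperpose_eq_bogF m hm a b _ _ h6 s hs1 hsm
  rw [hL, hR]
  have hXs := bogSuperpose_eq_bogF m hm a b x y h1 s hs1 hsm
  have hUs := bogSuperpose_eq_bogF m hm a c x z h4 s hs1 hsm
  obtain ⟨eFOs, hDs, hNs⟩ := bog_FO m hm a b c x y z h1 h2 h3 s hs1 hsm
  obtain ⟨eFOs', hDs', hNs'⟩ := bog_FO m hm a c b x z y h4 h5 h6 s hs1 hsm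
  have hF1s := bogF_ne_zero m a b x y h1 s hs1 hsm
  have hF3s := bogF_ne_zero m a c x z h4 s hs1 hsm
  have crs := bog_crN m a b c x y z h1 h2 h5 s hs1 hsm
  rcases eq_or_ne s 1 with rfl | hs
  · obtain ⟨eFO0, hF10⟩ := bog_FO0 m hm a b c x y z h1 h2 h3
    obtain ⟨eFO0', hF30⟩ := bog_FO0 m hm a c b x z y h4 h5 h6
    have hP : (∏ r ∈ Finset.range m, x (r + 1)) ≠ 0 :=
      Finset.prod_ne_zero_iff.mpr fun r hr => (h1 (r+1) (by omega)
        (by simp only [Finset.mem_range] at hr; omega)).1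
    have hF2m := bogF_ne_zero m c b z y h2 m hm le_rfl
    have hF4m := bogF_ne_zero m b c y z h5 m hm le_rfl
    have crM := bog_crM m hm a b c x y z h1 h2 h5
    rw [show (1:ℕ) - 1 = 0 from rfl] at hXs hUs ⊢
    rw [hXs, hUs, eFO0, eFO0', eFOs, eFOs']
    exact bog_assemble (x 1) (bogF m a b x y 0) (bogF m a b x y 1)
      (bogF m a c x z 0) (bogF m a c x z 1)
      (bogM m a b c x y z) ((∏ r ∈ Finset.range m, x (r + 1)) * bogF m c b z y m)
      (bogN m a b c x y z 1) (bogD m a b c x y z 1)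
      (bogM m a c b x z y) ((∏ r ∈ Finset.range m, x (r + 1)) * bogF m b c y z m)
      (bogN m a c b x z y 1) (bogD m a c b x z y 1)
      hF10 hF1s hF30 hF3s (mul_ne_zero hP hF2m) hNs (mul_ne_zero hP hF4m) hNs'
      hDs hDs'
      (by linear_combination (∏ r ∈ Finset.range m, x (r + 1)) * crM) crs
  · have hXp := bogSuperpose_eq_bogF m hm a b x y h1 (s-1) (by omega) (by omega)
    have hUp := bogSuperpose_eq_bogF m hm a c x z h4 (s-1) (by omega) (by omega)
    obtain ⟨eFOp, hDp, hNp⟩ := bog_FO m hm a b c x y z h1 h2 h3 (s-1) (by omega) (by omega)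
    obtain ⟨eFOp', hDp', hNp'⟩ := bog_FO m hm a c b x z y h4 h5 h6 (s-1) (by omega) (by omega)
    have hF1p := bogF_ne_zero m a b x y h1 (s-1) (by omega) (by omega)
    have hF3p := bogF_ne_zero m a c x z h4 (s-1) (by omega) (by omega)
    have crp := bog_crN m a b c x y z h1 h2 h5 (s-1) (by omega) (by omega)
    rw [hXs, hUs, eFOp, eFOp', eFOs, eFOs']
    exact bog_assemble (x s) (bogF m a b x y (s-1)) (bogF m a b x y s)
      (bogF m a c x z (s-1)) (bogF m a c x z s)
      (bogN m a b c x y z (s-1)) (bogD m a b c x y z (s-1))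
      (bogN m a b c x y z s) (bogD m a b c x y z s)
      (bogN m a c b x z y (s-1)) (bogD m a c b x z y (s-1))
      (bogN m a c b x z y s) (bogD m a c b x z y s)
      hF1p hF1s hF3p hF3s hDp hNs hDp' hNs' hDs hDs' crp crs
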